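/- arXiv:1506.00565 — 4 statements merged into one kernel-verified Lean document; each statement's English description precedes it below -/
import Mathlib

section
/- Let G be a set of positive integers and M(G) = {n : some g in G divides n}. If the sum of 1/g over g in G converges and 1 is not in G, then M(G) has an asymptotic density, and this density is strictly less than 1. -/
open Filter Finset

noncomputable def cnt (S : Set ℕ) (x : ℕ) : ℕ := (S ∩ Set.Icc 1 x).ncard

lemma cnt_eq (S : Set ℕ) (x : ℕ) : (S ∩ Set.Icc 1 x).ncard = cnt S x := rfl

lemma cnt_card {S : Set ℕ} {x : ℕ} {p : ℕ → Prop} [DecidablePred p] (hp : ∀ n, n ∈ S ↔ p n) :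
    cnt S x = ((Finset.Icc 1 x).filter p).card := by
  rw [cnt, show S ∩ Set.Icc 1 x = ↑((Finset.Icc 1 x).filter p) by
    ext n
    simp only [Set.mem_inter_iff, Set.mem_Icc, Finset.coe_filter, Finset.mem_Icc,
      Set.mem_setOf_eq, hp]
    tauto]
  exact Set.ncard_coe_finset _

lemma cnt_mono {S T : Set ℕ} (h : S ⊆ T) (x : ℕ) : cnt S x ≤ cnt T x :=
  Set.ncard_le_ncard (Set.inter_subset_inter_left _ h)
    ((Set.finite_Icc 1 x).inter_of_right _)

lemma cnt_le (S : Set ℕ) (x : ℕ) : cnt S x ≤ x := by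
  classical
  rw [cnt_card (p := fun n => n ∈ S) (fun n => Iff.rfl)]
  calc ((Finset.Icc 1 x).filter _).card ≤ (Finset.Icc 1 x).card := Finset.card_filter_le _ _
    _ = x := by rw [Nat.card_Icc]; omega

lemma cnt_dvd (g x : ℕ) : cnt {n | g ∣ n} x = x / g := by
  rw [cnt_card (S := {n | g ∣ n}) (p := fun n => g ∣ n) (fun n => Iff.rfl)]
  rw [show Finset.Icc 1 x = Finset.Ioc 0 x by ext n; simp [Nat.lt_iff_add_one_le]]
  exact Nat.Ioc_filter_dvd_card_eq_div x g

lemma cnt_split (S T : Set ℕ) (x : ℕ) : cnt (S ∩ T) x + cnt (S \ T) x = cnt S x := by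
  rw [cnt, cnt, cnt]
  have hu : S ∩ Set.Icc 1 x = (S ∩ T ∩ Set.Icc 1 x) ∪ ((S \ T) ∩ Set.Icc 1 x) := by
    ext n
    simp only [Set.mem_inter_iff, Set.mem_union, Set.mem_diff]
    tauto
  have hdisj : Disjoint (S ∩ T ∩ Set.Icc 1 x) ((S \ T) ∩ Set.Icc 1 x) := by
    rw [Set.disjoint_left]
    intro n hn hn'
    simp only [Set.mem_inter_iff, Set.mem_diff] at hn hn'
    tauto
  rw [hu, Set.ncard_union_eq hdisj ((Set.finite_Icc 1 x).inter_of_right _)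
    ((Set.finite_Icc 1 x).inter_of_right _)]

lemma cnt_add {S : Set ℕ} {P : ℕ} (hper : ∀ n, n ∈ S ↔ n + P ∈ S) (x : ℕ) :
    cnt S (P + x) = cnt S P + cnt S x := by
  classical
  rw [cnt_card (p := fun n => n ∈ S) (x := P + x) (fun n => Iff.rfl),
    cnt_card (p := fun n => n ∈ S) (x := P) (fun n => Iff.rfl),
    cnt_card (p := fun n => n ∈ S) (x := x) (fun n => Iff.rfl)]
  have hsplit : Finset.Icc 1 (P + x) = Finset.Icc 1 P ∪ Finset.Icc (P + 1) (P + x) := by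
    ext n; simp only [Finset.mem_Icc, Finset.mem_union]; omega
  have hdisj : Disjoint (Finset.Icc 1 P) (Finset.Icc (P + 1) (P + x)) := by
    rw [Finset.disjoint_left]; intro n hn hn'
    simp only [Finset.mem_Icc] at hn hn'; omega
  rw [hsplit, Finset.filter_union,
    Finset.card_union_of_disjoint (Finset.disjoint_filter_filter hdisj)]
  congr 1
  have hmap : Finset.Icc (P + 1) (P + x) = (Finset.Icc 1 x).map (addLeftEmbedding P) :=
    (Finset.map_add_left_Icc 1 x P).symm
  rw [hmap, Finset.filter_map, Finset.card_map]
  apply Finset.card_bij (fun n _ => n)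
  · intro n hn
    simp only [Finset.mem_filter, Function.comp] at hn ⊢
    refine ⟨hn.1, ?_⟩
    have := hn.2
    simp only [addLeftEmbedding_apply] at this
    rw [hper n, add_comm]; exact this
  · intro a _ b _ h; exact h
  · intro b hb
    simp only [Finset.mem_filter] at hb
    refine ⟨b, ?_, rfl⟩
    simp only [Finset.mem_filter, Function.comp, addLeftEmbedding_apply]
    exact ⟨hb.1, by rw [add_comm, ← hper b]; exact hb.2⟩

lemma cnt_qr {S : Set ℕ} {P : ℕ} (hper : ∀ n, n ∈ S ↔ n + P ∈ S) (q r : ℕ) :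
    cnt S (q * P + r) = q * cnt S P + cnt S r := by
  induction q with
  | zero => simp
  | succ q ih =>
      have : (q + 1) * P + r = P + (q * P + r) := by ring
      rw [this, cnt_add hper, ih]; ring

lemma cnt_zero (S : Set ℕ) : cnt S 0 = 0 := by
  rw [cnt]
  simp

lemma cnt_mul {S : Set ℕ} {P : ℕ} (hper : ∀ n, n ∈ S ↔ n + P ∈ S) (q : ℕ) :
    cnt S (q * P) = q * cnt S P := by
  have := cnt_qr hper q 0
  simpa [cnt_zero] using this

lemma tendsto_cnt_div {S : Set ℕ} {P : ℕ} (hP : 0 < P) (hper : ∀ n, n ∈ S ↔ n + P ∈ S) :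
    Tendsto (fun x : ℕ => (cnt S x : ℝ) / x) atTop (nhds ((cnt S P : ℝ) / P)) := by
  set d : ℝ := (cnt S P : ℝ) / P with hd
  have hPr : (0:ℝ) < P := by exact_mod_cast hP
  have hdnn : 0 ≤ d := div_nonneg (Nat.cast_nonneg _) hPr.le
  have hd1 : d ≤ 1 := by
    rw [hd, div_le_one hPr]; exact_mod_cast cnt_le S P
  have key : ∀ x : ℕ, |(cnt S x : ℝ) - x * d| ≤ P := by
    intro x
    have hx : x = (x / P) * P + x % P := by
      rw [Nat.div_add_mod']
    have hc : cnt S x = (x / P) * cnt S P + cnt S (x % P) := by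
      conv_lhs => rw [hx]
      exact cnt_qr hper _ _
    have hr : (x % P : ℕ) < P := Nat.mod_lt _ hP
    have h1 : (cnt S x : ℝ) - x * d = (cnt S (x % P) : ℝ) - (x % P : ℕ) * d := by
      rw [hc]
      push_cast
      rw [hd]
      field_simp
      ring_nf
      nlinarith [hx, (by exact_mod_cast congrArg (Nat.cast (R := ℝ)) hx : (x:ℝ) = (x/P : ℕ) * P + (x % P : ℕ))]
    rw [h1]
    have h2 : (0:ℝ) ≤ (cnt S (x % P) : ℝ) := Nat.cast_nonneg _
    have h3 : (cnt S (x % P) : ℝ) ≤ P := by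
      have := cnt_le S (x % P); have : (cnt S (x % P) : ℝ) ≤ (x % P : ℕ) := by exact_mod_cast this
      have hr' : ((x % P : ℕ) : ℝ) ≤ P := by exact_mod_cast hr.le
      linarith
    have h4 : (0:ℝ) ≤ ((x % P : ℕ):ℝ) * d := mul_nonneg (Nat.cast_nonneg _) hdnn
    have h5 : ((x % P : ℕ):ℝ) * d ≤ P := by
      have hr' : ((x % P : ℕ) : ℝ) ≤ P := by exact_mod_cast hr.le
      nlinarith
    rw [abs_le]; constructor <;> linarith
  rw [← tendsto_sub_nhds_zero_iff]
  apply squeeze_zero_norm' (a := fun x : ℕ => (P : ℝ) / x)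
  · filter_upwards [eventually_ge_atTop 1] with x hx
    have hxr : (0:ℝ) < x := by exact_mod_cast hx
    have : (cnt S x : ℝ) / x - d = ((cnt S x : ℝ) - x * d) / x := by field_simp
    rw [Real.norm_eq_abs, this, abs_div, abs_of_pos hxr]
    gcongr
    exact key x
  · exact tendsto_const_div_atTop_nhds_zero_nat (P : ℝ)

lemma weierstrass (F : Finset ℕ) (f : ℕ → ℝ) (h0 : ∀ g ∈ F, 0 ≤ f g) (h1 : ∀ g ∈ F, f g ≤ 1) :
    1 - ∑ g ∈ F, f g ≤ ∏ g ∈ F, (1 - f g) := by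
  classical
  induction F using Finset.induction_on with
  | empty => simp
  | insert _ _ ha ih =>
      rename_i a B
      rw [Finset.sum_insert ha, Finset.prod_insert ha]
      have hS : 0 ≤ ∑ g ∈ B, f g := Finset.sum_nonneg fun g hg => h0 g (Finset.mem_insert_of_mem hg)
      have hih := ih (fun g hg => h0 g (Finset.mem_insert_of_mem hg))
        (fun g hg => h1 g (Finset.mem_insert_of_mem hg))
      have ha0 : 0 ≤ f a := h0 a (Finset.mem_insert_self a B)
      have ha1 : f a ≤ 1 := h1 a (Finset.mem_insert_self a B)
      nlinarith

lemma sieve (F : Finset ℕ) (h1 : ∀ g ∈ F, 1 ≤ g) :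
    ((∏ g ∈ F, g : ℕ) : ℝ) * ∏ g ∈ F, (1 - 1 / (g : ℝ)) ≤
      (cnt {n | ∀ g ∈ F, ¬ g ∣ n} (∏ g ∈ F, g) : ℝ) := by
  classical
  induction F using Finset.induction_on with
  | empty =>
      simp only [Finset.prod_empty, Finset.notMem_empty, Nat.cast_one, one_mul]
      rw [cnt_card (p := fun n => True) (by simp)]
      simp
  | insert _ _ ha ih =>
      rename_i a B
      have ha1 : 1 ≤ a := h1 a (Finset.mem_insert_self a B)
      have hB1 : ∀ g ∈ B, 1 ≤ g := fun g hg => h1 g (Finset.mem_insert_of_mem hg)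
      set PB := ∏ g ∈ B, g with hPB
      have hPBpos : 0 < PB := Finset.prod_pos fun g hg => hB1 g hg
      have hP : ∏ g ∈ insert a B, g = a * PB := Finset.prod_insert ha
      set Av : Set ℕ := {n | ∀ g ∈ B, ¬ g ∣ n} with hAv
      have perB : ∀ n, n ∈ Av ↔ n + PB ∈ Av := by
        intro n
        simp only [hAv, Set.mem_setOf_eq]
        constructor
        · intro h g hg hdvd
          exact h g hg ((Nat.dvd_add_right (Finset.dvd_prod_of_mem _ hg)).mp
            (by rwa [add_comm] at hdvd))
        · intro h g hg hdvd
          exact h g hg (by rw [add_comm]; exact (Nat.dvd_add_right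
            (Finset.dvd_prod_of_mem _ hg)).mpr hdvd)
      have hset : {n : ℕ | ∀ g ∈ insert a B, ¬ g ∣ n} = Av \ {n | a ∣ n} := by
        ext n
        simp only [hAv, Set.mem_setOf_eq, Set.mem_diff, Finset.mem_insert]
        constructor
        · intro h
          exact ⟨fun g hg => h g (Or.inr hg), h a (Or.inl rfl)⟩
        · rintro ⟨h, hna⟩ g hg
          rcases hg with rfl | hg
          · exact hna
          · exact h g hg
      have hsplit : cnt (Av ∩ {n | a ∣ n}) (a * PB)
          + cnt {n | ∀ g ∈ insert a B, ¬ g ∣ n} (a * PB) = cnt Av (a * PB) := by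
        rw [hset]
        exact cnt_split Av {n | a ∣ n} (a * PB)
      have hmul : cnt Av (a * PB) = a * cnt Av PB := cnt_mul perB a
      have hinj : cnt (Av ∩ {n | a ∣ n}) (a * PB) ≤ cnt Av PB := by
        rw [cnt_card (S := Av ∩ {n | a ∣ n}) (p := fun n => n ∈ Av ∧ a ∣ n) (fun n => Iff.rfl),
          cnt_card (S := Av) (p := fun n => n ∈ Av) (x := PB) (fun n => Iff.rfl)]
        apply Finset.card_le_card_of_injOn (fun n => n / a)
        · intro n hn
          simp only [Finset.mem_coe, Finset.mem_filter, Finset.mem_Icc] at hn ⊢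
          obtain ⟨⟨hn1, hn2⟩, hAvn, hadvd⟩ := hn
          refine ⟨⟨?_, ?_⟩, ?_⟩
          · exact (Nat.one_le_div_iff (by omega)).mpr (Nat.le_of_dvd (by omega) hadvd)
          · have := Nat.div_le_div_right (c := a) hn2
            rwa [Nat.mul_div_cancel_left _ (by omega)] at this
          · intro g hg hgdvd
            exact hAvn g hg (hgdvd.trans (Nat.div_dvd_of_dvd hadvd))
        · intro m hm n hn hmn
          simp only [Finset.mem_coe, Finset.mem_filter] at hm hn
          have hma := hm.2.2
          have hna := hn.2.2
          have hmn' : m / a = n / a := hmn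
          rw [← Nat.mul_div_cancel' hma, ← Nat.mul_div_cancel' hna, hmn']
      have key : (a - 1 : ℝ) * cnt Av PB ≤ cnt {n | ∀ g ∈ insert a B, ¬ g ∣ n} (a * PB) := by
        have hthis := hsplit
        rw [hmul] at hthis
        have hcast : (cnt (Av ∩ {n | a ∣ n}) (a * PB) : ℝ)
            + cnt {n | ∀ g ∈ insert a B, ¬ g ∣ n} (a * PB) = a * cnt Av PB := by
          exact_mod_cast hthis
        have hle : (cnt (Av ∩ {n | a ∣ n}) (a * PB) : ℝ) ≤ cnt Av PB := by exact_mod_cast hinj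
        nlinarith
      rw [hP, Finset.prod_insert ha]
      have har : (1:ℝ) ≤ a := by exact_mod_cast ha1
      have halg : ((a * PB : ℕ) : ℝ) * ((1 - 1/(a:ℝ)) * ∏ g ∈ B, (1 - 1/(g:ℝ)))
          = (a - 1 : ℝ) * ((PB : ℕ) * ∏ g ∈ B, (1 - 1/(g:ℝ))) := by
        push_cast
        have ha0 : (a:ℝ) ≠ 0 := by positivity
        field_simp
      rw [halg]
      calc (a - 1 : ℝ) * ((PB : ℕ) * ∏ g ∈ B, (1 - 1/(g:ℝ)))
          ≤ (a - 1 : ℝ) * cnt Av PB := by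
            apply mul_le_mul_of_nonneg_left (ih hB1) (by linarith)
        _ ≤ _ := key

/-- If `G` is a set of positive integers with `1 ∉ G` and `∑ 1/g` convergent, then the
set of multiples `M(G) = {n : ∃ g ∈ G, g ∣ n}` has an asymptotic density, which is `< 1`. -/
theorem setOfMultiples_hasDensity_lt_one (G : Set ℕ) (hpos : ∀ g ∈ G, 0 < g)
    (hone : 1 ∉ G) (hsum : Summable fun g : G => (1 : ℝ) / (g : ℕ)) :
    ∃ δ : ℝ, δ < 1 ∧
      Tendsto (fun x : ℕ => (({n : ℕ | ∃ g ∈ G, g ∣ n} ∩ Set.Icc 1 x).ncard : ℝ) / x)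
        atTop (nhds δ) := by
  classical
  set M : Set ℕ := {n : ℕ | ∃ g ∈ G, g ∣ n} with hM
  set f : ℕ → ℝ := Set.indicator G (fun g => 1 / (g:ℝ)) with hf
  have hf_nonneg : ∀ g, 0 ≤ f g := by
    intro g
    rw [hf]
    apply Set.indicator_nonneg
    intro g _
    positivity
  have hf_sum : Summable f := summable_subtype_iff_indicator.mp hsum
  have hfg : ∀ g ∈ G, f g = 1 / g := fun g hg => Set.indicator_of_mem hg _
  set T : ℕ → ℝ := fun N => ∑' i, f (i + N) with hT
  have hT_eq : ∀ N, T N = ∑' i, f i - ∑ i ∈ Finset.range N, f i := by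
    intro N
    have := hf_sum.sum_add_tsum_nat_add N
    rw [hT]
    linarith
  have hT0 : Tendsto T atTop (nhds 0) := by
    have h2 : Tendsto (fun N => ∑' i, f i - ∑ i ∈ Finset.range N, f i) atTop
        (nhds (∑' i, f i - ∑' i, f i)) :=
      tendsto_const_nhds.sub hf_sum.hasSum.tendsto_sum_nat
    rw [sub_self] at h2
    exact (funext hT_eq : T = _) ▸ h2
  have hT_nonneg : ∀ N, 0 ≤ T N := fun N => tsum_nonneg fun i => hf_nonneg _
  have hT_bound : ∀ (N : ℕ) (s : Finset ℕ), (∀ g ∈ s, N ≤ g) → ∑ g ∈ s, f g ≤ T N := by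
    intro N s hs
    have hsummap : Summable fun i => f (i + N) := (summable_nat_add_iff N).mpr hf_sum
    have h1 : ∑ i ∈ s.image (· - N), f (i + N) = ∑ g ∈ s, f ((g - N) + N) := by
      apply Finset.sum_image
      intro a ha b hb hab
      have := hs a ha; have := hs b hb
      simp only at hab
      omega
    have h2 : ∑ g ∈ s, f ((g - N) + N) = ∑ g ∈ s, f g := by
      apply Finset.sum_congr rfl
      intro g hg
      congr 1
      have := hs g hg
      omega
    rw [← h2, ← h1]
    exact hsummap.sum_le_tsum _ (fun i _ => hf_nonneg _)
  -- truncations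
  set F : ℕ → Finset ℕ := fun N => (Finset.Icc 1 N).filter (· ∈ G) with hF
  have hFmem : ∀ N g, g ∈ F N ↔ (1 ≤ g ∧ g ≤ N) ∧ g ∈ G := by
    intro N g; rw [hF]; simp [Finset.mem_filter, Finset.mem_Icc]
  have hF2 : ∀ N g, g ∈ F N → 2 ≤ g := by
    intro N g hg
    rw [hFmem] at hg
    rcases hg with ⟨⟨h1, _⟩, hG⟩
    rcases Nat.lt_or_ge g 2 with h | h
    · have hg1 : g = 1 := by omega
      subst hg1
      exact absurd hG hone
    · exact h
  set MS : ℕ → Set ℕ := fun N => {n | ∃ g ∈ F N, g ∣ n} with hMS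
  set P : ℕ → ℕ := fun N => ∏ g ∈ F N, g with hP
  have hPpos : ∀ N, 0 < P N := fun N => Finset.prod_pos fun g hg => by
    have := hF2 N g hg; omega
  have hper : ∀ N n, n ∈ MS N ↔ n + P N ∈ MS N := by
    intro N n
    simp only [hMS, Set.mem_setOf_eq]
    constructor
    · rintro ⟨g, hg, hd⟩
      exact ⟨g, hg, by rw [add_comm]; exact (Nat.dvd_add_right
        (Finset.dvd_prod_of_mem _ hg)).mpr hd⟩
    · rintro ⟨g, hg, hd⟩
      exact ⟨g, hg, (Nat.dvd_add_right (Finset.dvd_prod_of_mem _ hg)).mp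
        (by rwa [add_comm] at hd)⟩
  set d : ℕ → ℝ := fun N => (cnt (MS N) (P N) : ℝ) / P N with hd
  have hdto : ∀ N, Tendsto (fun x : ℕ => (cnt (MS N) x : ℝ) / x) atTop (nhds (d N)) :=
    fun N => tendsto_cnt_div (hPpos N) (hper N)
  have hsubset : ∀ N, MS N ⊆ M := by
    rintro N n ⟨g, hg, hdv⟩
    exact ⟨g, ((hFmem N g).1 hg).2, hdv⟩
  -- comparison
  have hcomp : ∀ N x, (cnt M x : ℝ) ≤ cnt (MS N) x + x * T (N + 1) := by
    intro N x
    set u : Finset ℕ := ((Finset.Icc (N+1) x).filter (· ∈ G)).biUnion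
      (fun g => (Finset.Icc 1 x).filter (g ∣ ·)) with hu
    have hcnt : cnt M x ≤ cnt (MS N) x + u.card := by
      rw [cnt_card (S := M) (p := fun n => ∃ g ∈ G, g ∣ n) (fun n => Iff.rfl),
        cnt_card (S := MS N) (p := fun n => ∃ g ∈ F N, g ∣ n) (fun n => Iff.rfl)]
      have hsub : (Finset.Icc 1 x).filter (fun n => ∃ g ∈ G, g ∣ n) ⊆
          ((Finset.Icc 1 x).filter (fun n => ∃ g ∈ F N, g ∣ n)) ∪ u := by
        intro n hn
        simp only [Finset.mem_filter, Finset.mem_Icc] at hn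
        obtain ⟨⟨hn1, hn2⟩, g, hgG, hgd⟩ := hn
        by_cases hcase : ∃ g' ∈ F N, g' ∣ n
        · apply Finset.mem_union_left
          simp only [Finset.mem_filter, Finset.mem_Icc]
          exact ⟨⟨hn1, hn2⟩, hcase⟩
        · apply Finset.mem_union_right
          rw [hu, Finset.mem_biUnion]
          refine ⟨g, ?_, ?_⟩
          · simp only [Finset.mem_filter, Finset.mem_Icc]
            have hg1 := hpos g hgG
            have hgle : g ≤ n := Nat.le_of_dvd (by omega) hgd
            have : ¬ g ≤ N := by
              intro hgN
              exact hcase ⟨g, (hFmem N g).2 ⟨⟨hg1, hgN⟩, hgG⟩, hgd⟩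
            exact ⟨⟨by omega, by omega⟩, hgG⟩
          · simp only [Finset.mem_filter, Finset.mem_Icc]
            exact ⟨⟨hn1, hn2⟩, hgd⟩
      calc ((Finset.Icc 1 x).filter (fun n => ∃ g ∈ G, g ∣ n)).card
          ≤ (((Finset.Icc 1 x).filter (fun n => ∃ g ∈ F N, g ∣ n)) ∪ u).card :=
            Finset.card_le_card hsub
        _ ≤ _ := Finset.card_union_le _ _
    have hucard : (u.card : ℝ) ≤ x * T (N + 1) := by
      have h1 : u.card ≤ ∑ g ∈ (Finset.Icc (N+1) x).filter (· ∈ G),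
          ((Finset.Icc 1 x).filter (g ∣ ·)).card := Finset.card_biUnion_le
      have h2 : ∀ g ∈ (Finset.Icc (N+1) x).filter (· ∈ G),
          (((Finset.Icc 1 x).filter (g ∣ ·)).card : ℝ) ≤ x * f g := by
        intro g hg
        simp only [Finset.mem_filter, Finset.mem_Icc] at hg
        have hgG := hg.2
        have hg1 : 1 ≤ g := by have := hpos g hgG; omega
        have hcd : ((Finset.Icc 1 x).filter (g ∣ ·)).card = x / g := by
          rw [← cnt_card (S := {n | g ∣ n}) (p := fun n => g ∣ n) (fun n => Iff.rfl)]
          exact cnt_dvd g x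
        rw [hcd, hfg g hgG]
        calc ((x / g : ℕ) : ℝ) ≤ (x : ℝ) / g := Nat.cast_div_le
          _ = x * (1 / g) := by ring
      calc (u.card : ℝ) ≤ ∑ g ∈ (Finset.Icc (N+1) x).filter (· ∈ G),
            (((Finset.Icc 1 x).filter (g ∣ ·)).card : ℝ) := by exact_mod_cast h1
        _ ≤ ∑ g ∈ (Finset.Icc (N+1) x).filter (· ∈ G), x * f g :=
            Finset.sum_le_sum h2
        _ = x * ∑ g ∈ (Finset.Icc (N+1) x).filter (· ∈ G), f g := by
            rw [Finset.mul_sum]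
        _ ≤ x * T (N + 1) := by
            apply mul_le_mul_of_nonneg_left _ (Nat.cast_nonneg x)
            apply hT_bound
            intro g hg
            simp only [Finset.mem_filter, Finset.mem_Icc] at hg
            omega
    calc (cnt M x : ℝ) ≤ (cnt (MS N) x : ℝ) + u.card := by exact_mod_cast hcnt
      _ ≤ cnt (MS N) x + x * T (N + 1) := by linarith
  have hA_between : ∀ N x, 1 ≤ x →
      (cnt (MS N) x : ℝ) / x ≤ (cnt M x : ℝ) / x ∧
      (cnt M x : ℝ) / x ≤ (cnt (MS N) x : ℝ) / x + T (N + 1) := by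
    intro N x hx
    have hxr : (0:ℝ) < x := by exact_mod_cast hx
    constructor
    · apply div_le_div_of_nonneg_right _ hxr.le
      exact_mod_cast cnt_mono (hsubset N) x
    · have := hcomp N x
      rw [div_add' _ _ _ (ne_of_gt hxr)]
      apply div_le_div_of_nonneg_right _ hxr.le
      calc (cnt M x : ℝ) ≤ cnt (MS N) x + x * T (N + 1) := this
        _ = cnt (MS N) x + T (N + 1) * x := by ring
  -- Cauchy
  have hcauchy : CauchySeq (fun x : ℕ => (cnt M x : ℝ) / x) := by
    rw [Metric.cauchySeq_iff']
    intro ε hε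
    obtain ⟨N0, hN0⟩ := Metric.tendsto_atTop.mp hT0 (ε / 5) (by linarith)
    have hTN : T (N0 + 1) < ε / 5 := by
      have := hN0 (N0 + 1) (by omega)
      rwa [Real.dist_eq, sub_zero, abs_of_nonneg (hT_nonneg _)] at this
    obtain ⟨X0, hX0⟩ := Metric.tendsto_atTop.mp (hdto N0) (ε / 5) (by linarith)
    refine ⟨max X0 1, ?_⟩
    intro x hx
    have hclose : ∀ y : ℕ, max X0 1 ≤ y → |(cnt M y : ℝ) / y - d N0| < 2 * ε / 5 := by
      intro y hy
      have hy1 : 1 ≤ y := le_trans (le_max_right _ _) hy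
      have hyX : X0 ≤ y := le_trans (le_max_left _ _) hy
      obtain ⟨hlo, hhi⟩ := hA_between N0 y hy1
      have hdist := hX0 y hyX
      rw [Real.dist_eq] at hdist
      rw [abs_lt] at hdist ⊢
      constructor <;> [linarith [hT_nonneg (N0+1)]; linarith]
    have h1 := hclose x hx
    have h2 := hclose (max X0 1) le_rfl
    rw [Real.dist_eq]
    rw [abs_lt] at h1 h2 ⊢
    constructor <;> linarith
  obtain ⟨δ, hδ⟩ := cauchySeq_tendsto_of_complete hcauchy
  refine ⟨δ, ?_, hδ⟩
  -- now show δ < 1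
  obtain ⟨N0', hN0'⟩ := Metric.tendsto_atTop.mp hT0 (1 / 2) (by norm_num)
  set N0 := N0' + 1 with hN0def
  have hTN0 : T (N0 + 1) ≤ 1 / 2 := by
    have := hN0' (N0 + 1) (by omega)
    rw [Real.dist_eq, sub_zero, abs_of_nonneg (hT_nonneg _)] at this
    linarith
  set C : ℝ := ∏ g ∈ F N0, (1 - 1 / (g:ℝ)) with hC
  have hfac : ∀ g ∈ F N0, 0 < 1 - 1 / (g:ℝ) := by
    intro g hg
    have h2 : (2:ℝ) ≤ g := by exact_mod_cast hF2 N0 g hg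
    have : 1 / (g:ℝ) ≤ 1 / 2 := by
      apply div_le_div_of_nonneg_left one_pos.le (by linarith) h2
    linarith
  have hCpos : 0 < C := Finset.prod_pos hfac
  have hC1 : C ≤ 1 := by
    apply Finset.prod_le_one
    · intro g hg; linarith [hfac g hg]
    · intro g hg
      have h2 : (2:ℝ) ≤ g := by exact_mod_cast hF2 N0 g hg
      have : 0 ≤ 1 / (g:ℝ) := by positivity
      linarith
  obtain ⟨N1, hN1⟩ := Metric.tendsto_atTop.mp hT0 (C / 4) (by linarith)
  set N := max N1 N0 with hNdef
  have hTN : T (N + 1) < C / 4 := by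
    have := hN1 (N + 1) (le_trans (le_max_left N1 N0) (Nat.le_succ _))
    rwa [Real.dist_eq, sub_zero, abs_of_nonneg (hT_nonneg _)] at this
  have hFsub : F N0 ⊆ F N := by
    intro g hg
    rw [hFmem] at hg
    exact (hFmem N g).2 ⟨⟨hg.1.1, le_trans hg.1.2 (le_max_right N1 N0)⟩, hg.2⟩
  have hdiffge : (1:ℝ) / 2 ≤ ∏ g ∈ F N \ F N0, (1 - 1 / (g:ℝ)) := by
    have hmemG : ∀ g ∈ F N \ F N0, g ∈ G := fun g hg =>
      ((hFmem N g).1 (Finset.mem_sdiff.mp hg).1).2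
    have h0 : ∀ g ∈ F N \ F N0, 0 ≤ 1 / (g:ℝ) := by
      intro g hg; positivity
    have h1 : ∀ g ∈ F N \ F N0, 1 / (g:ℝ) ≤ 1 := by
      intro g hg
      have h2 : (2:ℝ) ≤ g := by exact_mod_cast hF2 N g (Finset.mem_sdiff.mp hg).1
      rw [div_le_one (by linarith)]; linarith
    have hw := weierstrass (F N \ F N0) (fun g => 1 / (g:ℝ)) h0 h1
    have hsumeq : ∑ g ∈ F N \ F N0, 1 / (g:ℝ) = ∑ g ∈ F N \ F N0, f g :=
      Finset.sum_congr rfl fun g hg => (hfg g (hmemG g hg)).symm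
    have hsle : ∑ g ∈ F N \ F N0, f g ≤ T (N0 + 1) := by
      apply hT_bound
      intro g hg
      rcases Finset.mem_sdiff.mp hg with ⟨hgN, hgN0⟩
      have hmem := (hFmem N g).1 hgN
      by_contra hlt
      push_neg at hlt
      exact hgN0 ((hFmem N0 g).2 ⟨⟨hmem.1.1, by omega⟩, hmem.2⟩)
    rw [hsumeq] at hw
    linarith
  have hprodge : C / 2 ≤ ∏ g ∈ F N, (1 - 1 / (g:ℝ)) := by
    rw [← Finset.prod_sdiff hFsub]
    calc C / 2 = (1/2) * C := by ring
      _ ≤ (∏ g ∈ F N \ F N0, (1 - 1 / (g:ℝ))) * C :=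
          mul_le_mul_of_nonneg_right hdiffge hCpos.le
      _ = _ := by rw [hC]
  have hsieve : ((P N : ℕ) : ℝ) * ∏ g ∈ F N, (1 - 1 / (g:ℝ)) ≤
      (cnt {n | ∀ g ∈ F N, ¬ g ∣ n} (P N) : ℝ) := by
    have := sieve (F N) (fun g hg => by have := hF2 N g hg; omega)
    simpa only [hP] using this
  have hsplitu := cnt_split Set.univ (MS N) (P N)
  rw [Set.univ_inter] at hsplitu
  have hcompl : Set.univ \ MS N = {n | ∀ g ∈ F N, ¬ g ∣ n} := by
    ext n
    simp only [Set.mem_diff, Set.mem_univ, true_and, hMS, Set.mem_setOf_eq]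
    push_neg
    rfl
  rw [hcompl] at hsplitu
  have huniv : cnt Set.univ (P N) = P N := by
    rw [cnt, Set.univ_inter, show Set.Icc 1 (P N) = ↑(Finset.Icc 1 (P N)) by simp,
      Set.ncard_coe_finset, Nat.card_Icc]
    omega
  rw [huniv] at hsplitu
  have hPr : (0:ℝ) < P N := by exact_mod_cast hPpos N
  have hdle : d N ≤ 1 - C / 2 := by
    simp only [hd]
    rw [div_le_iff₀ hPr]
    have hAv : (P N : ℝ) * (C / 2) ≤ (cnt {n | ∀ g ∈ F N, ¬ g ∣ n} (P N) : ℝ) :=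
      le_trans (mul_le_mul_of_nonneg_left hprodge (Nat.cast_nonneg _)) hsieve
    have hcast : (cnt (MS N) (P N) : ℝ) + (cnt {n | ∀ g ∈ F N, ¬ g ∣ n} (P N) : ℝ)
        = (P N : ℝ) := by exact_mod_cast hsplitu
    nlinarith
  have hδle : δ ≤ d N + T (N + 1) := by
    apply le_of_tendsto_of_tendsto hδ ((hdto N).add tendsto_const_nhds)
    filter_upwards [eventually_ge_atTop 1] with x hx
    exact (hA_between N x hx).2
  calc δ ≤ d N + T (N + 1) := hδle
    _ < 1 - C / 2 + C / 4 := by linarith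
    _ < 1 := by linarith
end

section
/- If f : Z⁺ → C and g : Z⁺ → C satisfy f(n) = Σ_{d|n} g(d) for all n, and Σ_{n≥1} |g(n)|/n converges, then Σ_{n≤x} f(n) = (S + o(1))·x as x → ∞, where S = Σ_{n≥1} g(n)/n. -/
open Filter

/-- Wintner's mean value theorem: if `f(n) = ∑_{d ∣ n} g(d)` and `∑ |g(n)|/n < ∞`, then
`∑_{n ≤ x} f(n) = (S + o(1))·x` where `S = ∑_{n ≥ 1} g(n)/n`. -/
theorem wintner_mean_value (f g : ℕ → ℂ)
    (hfg : ∀ n : ℕ, 0 < n → f n = ∑ d ∈ n.divisors, g d)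
    (habs : Summable fun n : ℕ => ‖g n‖ / n) :
    Tendsto (fun x : ℕ => (∑ n ∈ Finset.Icc 1 x, f n) / (x : ℂ)) atTop
      (nhds (∑' n : ℕ, g n / (n : ℂ))) := by
  set F : ℕ → ℕ → ℂ := fun x d =>
    if d ∈ Finset.Icc 1 x then g d * ((x / d : ℕ) : ℂ) / (x : ℂ) else 0 with hF
  -- Key identity: the partial sum divided by x equals the tsum of F x
  have key : ∀ x : ℕ, (∑' d : ℕ, F x d) = (∑ n ∈ Finset.Icc 1 x, f n) / (x : ℂ) := by
    intro x
    have hsupp : ∀ d : ℕ, d ∉ Finset.Icc 1 x → F x d = 0 := by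
      intro d hd; simp only [hF]; rw [if_neg hd]
    rw [tsum_eq_sum hsupp]
    have h1 : ∀ d ∈ Finset.Icc 1 x, F x d = g d * ((x / d : ℕ) : ℂ) / (x : ℂ) := by
      intro d hd; simp only [hF]; rw [if_pos hd]
    rw [Finset.sum_congr rfl h1]
    have h2 : (∑ n ∈ Finset.Icc 1 x, f n)
        = ∑ d ∈ Finset.Icc 1 x, g d * ((x / d : ℕ) : ℂ) := by
      have hcong : ∀ n ∈ Finset.Icc 1 x, f n = ∑ d ∈ n.divisors, g d := by
        intro n hn
        exact hfg n (Finset.mem_Icc.mp hn).1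
      rw [Finset.sum_congr rfl hcong]
      have hIcc : Finset.Icc 1 x = Finset.Ioc 0 x := rfl
      rw [hIcc]
      rw [Finset.sum_comm' (t' := Finset.Ioc 0 x)
        (s' := fun d => (Finset.Ioc 0 x).filter (d ∣ ·))
        (h := by
          intro n d
          simp only [Finset.mem_Ioc, Nat.mem_divisors, Finset.mem_filter]
          constructor
          · rintro ⟨⟨hn0, hnx⟩, hd, -⟩
            exact ⟨⟨⟨hn0, hnx⟩, hd⟩,
              Nat.pos_of_dvd_of_pos hd hn0, le_trans (Nat.le_of_dvd hn0 hd) hnx⟩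
          · rintro ⟨⟨⟨hn0, hnx⟩, hd⟩, -, -⟩
            exact ⟨⟨hn0, hnx⟩, hd, hn0.ne'⟩)]
      apply Finset.sum_congr rfl
      intro d _
      rw [Finset.sum_const, Nat.Ioc_filter_dvd_card_eq_div, nsmul_eq_mul, mul_comm]
    rw [h2, Finset.sum_div]
  refine Tendsto.congr key (tendsto_tsum_of_dominated_convergence (f := F)
    (g := fun d => g d / (d : ℂ)) (bound := fun d => ‖g d‖ / d) habs ?_ ?_)
  · -- pointwise convergence
    intro d
    rcases Nat.eq_zero_or_pos d with rfl | hd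
    · have hz : ∀ x : ℕ, F x 0 = 0 := by
        intro x
        simp only [hF]
        rw [if_neg (by simp)]
      simp only [hz, Nat.cast_zero, div_zero]
      exact tendsto_const_nhds
    · have hd0 : (0 : ℝ) < d := by exact_mod_cast hd
      have hreal : Tendsto (fun x : ℕ => ((x / d : ℕ) : ℝ) / (x : ℝ)) atTop
          (nhds (1 / (d : ℝ))) := by
        rw [tendsto_iff_norm_sub_tendsto_zero]
        apply squeeze_zero' (g := fun x : ℕ => 1 / (x : ℝ))
          (Eventually.of_forall fun x => norm_nonneg _)
        · filter_upwards [eventually_ge_atTop 1] with x hx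
          have hx0 : (0 : ℝ) < x := by exact_mod_cast hx
          · skip
            have hxd : (d : ℝ) * ((x / d : ℕ) : ℝ) + ((x % d : ℕ) : ℝ) = x := by
              exact_mod_cast Nat.div_add_mod x d
            have hkey : ((x / d : ℕ) : ℝ) / x - 1 / d = -(((x % d : ℕ) : ℝ) / (d * x)) := by
              rw [div_sub_div _ _ hx0.ne' hd0.ne', ← neg_div,
                div_eq_div_iff (by positivity) (by positivity)]
              linear_combination ((d : ℝ) * x) * hxd
            rw [hkey, norm_neg, Real.norm_eq_abs,
              abs_of_nonneg (by positivity)]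
            have hmod : ((x % d : ℕ) : ℝ) ≤ d := by
              exact_mod_cast (Nat.mod_lt x hd).le
            rw [div_le_div_iff₀ (by positivity) hx0]
            calc ((x % d : ℕ) : ℝ) * x ≤ d * x := by nlinarith
              _ = 1 * (d * x) := by ring
        · exact tendsto_one_div_atTop_nhds_zero_nat
      have hcplx : Tendsto (fun x : ℕ => ((x / d : ℕ) : ℂ) / (x : ℂ)) atTop
          (nhds (1 / (d : ℂ))) := by
        have := (Complex.continuous_ofReal.tendsto _).comp hreal
        refine Tendsto.congr (fun x => ?_) (by simpa using this)
        simp only [Function.comp_apply, Complex.ofReal_div, Complex.ofReal_natCast]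
      have := hcplx.const_mul (g d)
      refine Tendsto.congr' ?_ (by rw [mul_one_div] at this; exact this)
      filter_upwards [eventually_ge_atTop d] with x hx
      simp only [hF]
      rw [if_pos (Finset.mem_Icc.mpr ⟨hd, hx⟩), mul_div_assoc]
  · -- bound
    filter_upwards with x
    intro d
    by_cases hd : d ∈ Finset.Icc 1 x
    · simp only [hF]
      rw [if_pos hd]
      obtain ⟨hd1, hdx⟩ := Finset.mem_Icc.mp hd
      have hx : 0 < x := lt_of_lt_of_le hd1 hdx
      have hx0 : (0 : ℝ) < x := by exact_mod_cast hx
      have hd0 : (0 : ℝ) < d := by exact_mod_cast hd1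
      rw [norm_div, norm_mul]
      simp only [Complex.norm_natCast]
      rw [div_le_div_iff₀ hx0 hd0]
      have h : (d : ℝ) * ((x / d : ℕ) : ℝ) ≤ (x : ℝ) := by
        exact_mod_cast Nat.mul_div_le x d
      calc ‖g d‖ * ((x / d : ℕ) : ℝ) * d = ‖g d‖ * ((d : ℝ) * ((x / d : ℕ) : ℝ)) := by ring
        _ ≤ ‖g d‖ * x := mul_le_mul_of_nonneg_left h (norm_nonneg _)
    · simp only [hF]
      rw [if_neg hd, norm_zero]
      positivity
end

section
/- With Λ(n) defined as above, every λ in Λ(n) satisfies Ω(λ) ≥ Ω(n) − 2, where Ω counts prime factors with multiplicity. -/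
open ArithmeticFunction
open scoped ArithmeticFunction.Omega

/-- The 3-element set of local factors at the prime power `ℓ^α`. -/
def LamSet (ℓ α : ℕ) : Set ℕ :=
  if 2 ≤ α then {ℓ ^ (α - 2) * (ℓ - 1) * (ℓ + 1), ℓ ^ (α - 2) * (ℓ - 1) ^ 2,
    ℓ ^ (α - 1) * (ℓ - 1)}
  else {ℓ ^ 2 - 1, (ℓ - 1) ^ 2, ℓ - 1}

/-- `Λ(n)`: products over the primes `ℓ ∣ n` (with `ℓ^α ∥ n`) of elements of `LamSet ℓ α`. -/
def Lam (n : ℕ) : Set ℕ :=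
  {m | ∃ f : ℕ → ℕ, (∀ p ∈ n.primeFactors, f p ∈ LamSet p (n.factorization p)) ∧
    m = ∏ p ∈ n.primeFactors, f p}

lemma omega_pos {m : ℕ} (hm : 2 ≤ m) : 1 ≤ Ω m := by
  rcases Nat.exists_prime_and_dvd (show m ≠ 1 by omega) with ⟨p, hp, hpd⟩
  by_contra h
  have h0 : Ω m = 0 := by omega
  rw [cardFactors_apply, List.length_eq_zero_iff, Nat.primeFactorsList_eq_nil] at h0
  omega

lemma omega_prod (s : Finset ℕ) (f : ℕ → ℕ) (hf : ∀ p ∈ s, f p ≠ 0) :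
    Ω (∏ p ∈ s, f p) = ∑ p ∈ s, Ω (f p) := by
  classical
  induction s using Finset.induction with
  | empty => simp
  | @insert a s hx ih =>
    rw [Finset.prod_insert hx, Finset.sum_insert hx,
      cardFactors_mul (hf a (Finset.mem_insert_self a s))
        (Finset.prod_ne_zero_iff.2 fun p hp => hf p (Finset.mem_insert_of_mem hp)),
      ih fun p hp => hf p (Finset.mem_insert_of_mem hp)]

lemma lamset_bound {p α m : ℕ} (hp : p.Prime) (hα : 1 ≤ α) (hm : m ∈ LamSet p α) :
    m ≠ 0 ∧ α ≤ Ω m + (if p = 2 then 2 else 0) := by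
  have hp2 : 2 ≤ p := hp.two_le
  have hppow : ∀ k : ℕ, Ω (p ^ k) = k := fun k => cardFactors_apply_prime_pow hp
  by_cases h2 : 2 ≤ α
  · simp only [LamSet, if_pos h2, Set.mem_insert_iff, Set.mem_singleton_iff] at hm
    by_cases hpe : p = 2
    · subst hpe
      simp only [if_pos rfl]
      have h3 : Ω 3 = 1 := cardFactors_apply_prime (by norm_num)
      rcases hm with hm | hm | hm <;> subst hm <;>
        simp only [show (2:ℕ) - 1 = 1 from rfl, mul_one, one_pow, one_mul] <;>
        refine ⟨by positivity, ?_⟩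
      · rw [cardFactors_mul (by positivity) (by norm_num), hppow, h3]
        simp only [if_true, ite_true]; omega
      · rw [hppow]; simp only [if_true, ite_true]; omega
      · rw [hppow]; simp only [if_true, ite_true]; omega
    · have hp3 : 3 ≤ p := by
        rcases hp.eq_two_or_odd with h | h; · omega
        omega
      have h1 : 2 ≤ p - 1 := by omega
      have h1' : (p - 1 : ℕ) ≠ 0 := by omega
      simp only [if_neg hpe]
      rcases hm with hm | hm | hm <;> subst hm
      · refine ⟨by positivity, ?_⟩
        rw [cardFactors_mul (by positivity) (by omega),
          cardFactors_mul (by positivity) h1', hppow]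
        have := omega_pos h1
        have := omega_pos (show 2 ≤ p + 1 by omega)
        omega
      · refine ⟨by positivity, ?_⟩
        rw [cardFactors_mul (by positivity) (by positivity), hppow, pow_two,
          cardFactors_mul h1' h1']
        have := omega_pos h1
        omega
      · refine ⟨by positivity, ?_⟩
        rw [cardFactors_mul (by positivity) h1', hppow]
        have := omega_pos h1
        omega
  · have hα1 : α = 1 := by omega
    subst hα1
    simp only [LamSet, if_neg h2, Set.mem_insert_iff, Set.mem_singleton_iff] at hm
    by_cases hpe : p = 2
    · subst hpe
      rcases hm with hm | hm | hm <;> subst hm <;> norm_num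
    · have hp3 : 3 ≤ p := by
        rcases hp.eq_two_or_odd with h | h; · omega
        omega
      simp only [if_neg hpe]
      rcases hm with hm | hm | hm <;> subst hm
      · have h9 : 3 * 3 ≤ p ^ 2 := by rw [pow_two]; exact Nat.mul_le_mul hp3 hp3
        have h8 : 2 ≤ p ^ 2 - 1 := by omega
        exact ⟨by omega, by have := omega_pos h8; omega⟩
      · have h4 : 2 ≤ (p - 1) ^ 2 := by
          rw [pow_two]; have : 2 ≤ p - 1 := by omega
          calc 2 ≤ 2 * 2 := by norm_num
            _ ≤ (p-1)*(p-1) := Nat.mul_le_mul this this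
        exact ⟨by omega, by have := omega_pos h4; omega⟩
      · exact ⟨by omega, by have := omega_pos (show 2 ≤ p - 1 by omega); omega⟩

/-- Every `λ ∈ Λ(n)` satisfies `Ω(λ) ≥ Ω(n) − 2`. -/
theorem Lam_Omega_lower_bound (n : ℕ) (hn : 0 < n) (lam : ℕ) (hlam : lam ∈ Lam n) :
    (n.primeFactorsList.length : ℤ) - 2 ≤ (lam.primeFactorsList.length : ℤ) := by
  classical
  obtain ⟨f, hf, rfl⟩ := hlam
  have hkey : ∀ p ∈ n.primeFactors, f p ≠ 0 ∧
      n.factorization p ≤ Ω (f p) + (if p = 2 then 2 else 0) := by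
    intro p hp
    have hpp : p.Prime := Nat.prime_of_mem_primeFactors hp
    have hα : 1 ≤ n.factorization p :=
      (Nat.Prime.factorization_pos_of_dvd hpp hn.ne' (Nat.dvd_of_mem_primeFactors hp))
    exact lamset_bound hpp hα (hf p hp)
  have hΩn : Ω n = ∑ p ∈ n.primeFactors, n.factorization p := by
    conv_lhs => rw [← Nat.factorization_prod_pow_eq_self hn.ne']
    rw [Finsupp.prod, Nat.support_factorization,
      omega_prod _ _ fun p hp =>
        pow_ne_zero _ (Nat.pos_of_mem_primeFactors hp).ne']
    exact Finset.sum_congr rfl fun p hp => cardFactors_apply_prime_pow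
      (Nat.prime_of_mem_primeFactors hp)
  have hΩl : Ω (∏ p ∈ n.primeFactors, f p) = ∑ p ∈ n.primeFactors, Ω (f p) :=
    omega_prod _ _ fun p hp => (hkey p hp).1
  have hsum : ∑ p ∈ n.primeFactors, n.factorization p ≤
      (∑ p ∈ n.primeFactors, Ω (f p)) + 2 := by
    calc ∑ p ∈ n.primeFactors, n.factorization p
        ≤ ∑ p ∈ n.primeFactors, (Ω (f p) + if p = 2 then 2 else 0) :=
          Finset.sum_le_sum fun p hp => (hkey p hp).2
      _ = (∑ p ∈ n.primeFactors, Ω (f p)) +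
          ∑ p ∈ n.primeFactors, (if p = 2 then 2 else 0) := Finset.sum_add_distrib
      _ ≤ (∑ p ∈ n.primeFactors, Ω (f p)) + 2 := by
          gcongr
          calc ∑ p ∈ n.primeFactors, (if p = 2 then 2 else 0)
              ≤ ∑ p ∈ n.primeFactors, if p = 2 then 2 else 0 := le_rfl
            _ ≤ 2 := by
                rw [Finset.sum_ite_eq' n.primeFactors 2 (fun _ => 2)]
                split <;> omega
  have h1 : Ω n ≤ Ω (∏ p ∈ n.primeFactors, f p) + 2 := by
    rw [hΩn, hΩl]; exact hsum
  rw [cardFactors_apply, cardFactors_apply] at h1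
  omega
end

section
/- There exists a positive constant C₃ such that for all positive integers K and real x ≥ 3, the number of positive integers d ≤ x with Ω(d) ≥ K is at most C₃ · (K/2^K) · x · log x. -/
open Finset

lemma omega_mul {a b : ℕ} (ha : a ≠ 0) (hb : b ≠ 0) :
    (a*b).primeFactorsList.length
      = a.primeFactorsList.length + b.primeFactorsList.length := by
  simpa using (Nat.perm_primeFactorsList_mul ha hb).length_eq

lemma omega_pow {p : ℕ} (hp : p.Prime) (k : ℕ) :
    (p^k).primeFactorsList.length = k := by
  rw [hp.primeFactorsList_pow]; simp

lemma tau_squarefree {a : ℕ} (ha : a ≠ 0) (hsq : Squarefree a) :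
    a.divisors.card = 2 ^ a.primeFactorsList.length := by
  rw [Nat.card_divisors ha]
  have hn : a.primeFactorsList.Nodup :=
    (Nat.squarefree_iff_nodup_primeFactorsList ha).mp hsq
  have hlen : a.primeFactorsList.length = a.primeFactors.card := by
    rw [Nat.primeFactors, List.card_toFinset, hn.dedup]
  rw [hlen, ← Finset.prod_const]
  refine Finset.prod_congr rfl fun p hp => ?_
  have h1 : a.factorization p = 1 := by
    have h2 := (hsq.natFactorization_le_one p)
    have h3 : 1 ≤ a.factorization p := by
      rw [← Nat.Prime.pow_dvd_iff_le_factorization (Nat.prime_of_mem_primeFactors hp) ha, pow_one]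
      exact Nat.dvd_of_mem_primeFactors hp
    omega
  rw [h1]

lemma sum_tau_eq (n : ℕ) :
    ∑ a ∈ Ioc 0 n, a.divisors.card = ∑ c ∈ Ioc 0 n, n / c := by
  have h1 : ∀ a ∈ Ioc 0 n, a.divisors.card = ((Ioc 0 n).filter (· ∣ a)).card := by
    intro a ha
    simp only [mem_Ioc] at ha
    congr 1
    ext c
    simp only [Nat.mem_divisors, mem_filter, mem_Ioc]
    constructor
    · rintro ⟨hc, h0⟩
      exact ⟨⟨Nat.pos_of_dvd_of_pos hc ha.1, le_trans (Nat.le_of_dvd ha.1 hc) ha.2⟩, hc⟩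
    · rintro ⟨_, hc⟩; exact ⟨hc, by omega⟩
  rw [Finset.sum_congr rfl h1]
  simp only [Finset.card_filter]
  rw [Finset.sum_comm]
  refine Finset.sum_congr rfl fun c hc => ?_
  rw [← Nat.Ioc_filter_dvd_card_eq_div n c, Finset.card_filter]

lemma sum_tau_le (n : ℕ) :
    (∑ a ∈ Icc 1 n, (a.divisors.card : ℝ)) ≤ n * (1 + Real.log n) := by
  have e : Icc 1 n = Ioc 0 n := rfl
  rw [e]
  have := sum_tau_eq n
  calc (∑ a ∈ Ioc 0 n, (a.divisors.card : ℝ))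
      = ((∑ a ∈ Ioc 0 n, a.divisors.card : ℕ) : ℝ) := by push_cast; ring
    _ = ((∑ c ∈ Ioc 0 n, n / c : ℕ) : ℝ) := by rw [this]
    _ = ∑ c ∈ Ioc 0 n, ((n / c : ℕ) : ℝ) := by push_cast; ring
    _ ≤ ∑ c ∈ Ioc 0 n, (n : ℝ) * (c : ℝ)⁻¹ := by
        refine Finset.sum_le_sum fun c hc => ?_
        simp only [mem_Ioc] at hc
        rw [← div_eq_mul_inv]
        exact Nat.cast_div_le
    _ = n * ∑ c ∈ Ioc 0 n, (c : ℝ)⁻¹ := by rw [Finset.mul_sum]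
    _ ≤ n * (1 + Real.log n) := by
        refine mul_le_mul_of_nonneg_left ?_ (by positivity)
        calc ∑ c ∈ Ioc 0 n, (c : ℝ)⁻¹ = ((harmonic n : ℚ) : ℝ) := by
              rw [harmonic_eq_sum_Icc]; push_cast; rfl
          _ ≤ 1 + Real.log n := harmonic_le_one_add_log n

lemma telescope' (n : ℕ) (hn : 1 ≤ n) :
    ∑ j ∈ Icc 2 n, ((j:ℝ)⁻¹ - ((j:ℝ)+1)⁻¹) ≤ 1/2 - ((n:ℝ)+1)⁻¹ := by
  induction n, hn using Nat.le_induction with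
  | base => rw [Finset.Icc_eq_empty (by omega)]; norm_num
  | succ n hn ih =>
    rw [Finset.sum_Icc_succ_top (by omega : 2 ≤ n + 1)]
    push_cast
    have h2 : (0:ℝ) < (n:ℝ) + 1 := by positivity
    linarith [ih]

lemma telescope (n : ℕ) :
    ∑ j ∈ Icc 2 n, ((j:ℝ)⁻¹ - ((j:ℝ)+1)⁻¹) ≤ 1/2 := by
  rcases Nat.lt_or_ge n 1 with h | h
  · rw [Finset.Icc_eq_empty (by omega)]; norm_num
  · have := telescope' n h
    have h2 : (0:ℝ) ≤ ((n:ℝ)+1)⁻¹ := by positivity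
    linarith

lemma sum_le_sum_inj {α β : Type*} [DecidableEq β] {s : Finset α} {t : Finset β}
    (e : α → β) (he : ∀ a ∈ s, e a ∈ t)
    (hinj : ∀ a ∈ s, ∀ b ∈ s, e a = e b → a = b)
    {f : α → ℝ} {g : β → ℝ} (hg : ∀ b ∈ t, 0 ≤ g b)
    (hfg : ∀ a ∈ s, f a ≤ g (e a)) : ∑ a ∈ s, f a ≤ ∑ b ∈ t, g b := by
  calc ∑ a ∈ s, f a ≤ ∑ a ∈ s, g (e a) := Finset.sum_le_sum hfg
    _ = ∑ b ∈ s.image e, g b := (Finset.sum_image hinj).symm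
    _ ≤ ∑ b ∈ t, g b := by
        refine Finset.sum_le_sum_of_subset_of_nonneg ?_ fun b hb _ => hg b hb
        intro b hb
        obtain ⟨a, ha, rfl⟩ := Finset.mem_image.mp hb
        exact he a ha

lemma theta_le (n : ℕ) :
    ∑ p ∈ (Icc 3 n).filter (fun p => Odd p), 4/(p:ℝ)^2 ≤ 17/18 := by
  have step1 : ∑ p ∈ (Icc 5 n).filter (fun p => Odd p), 4/(p:ℝ)^2
      ≤ ∑ j ∈ Icc 2 n, ((j:ℝ)⁻¹ - ((j:ℝ)+1)⁻¹) := by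
    refine sum_le_sum_inj (fun p => p / 2) ?_ ?_ ?_ ?_
    · intro p hp
      simp only [mem_filter, mem_Icc] at hp ⊢
      obtain ⟨⟨h5, hn⟩, hodd⟩ := hp
      constructor <;> omega
    · intro p hp q hq hpq
      simp only [mem_filter, mem_Icc, Nat.odd_iff] at hp hq
      have h : p / 2 = q / 2 := hpq
      omega
    · intro j hj
      simp only [mem_Icc] at hj
      have h1 : (0:ℝ) < j := by exact_mod_cast Nat.lt_of_lt_of_le (by norm_num) hj.1
      have h2 : (j:ℝ) ≤ (j:ℝ) + 1 := by linarith
      have := inv_anti₀ h1 h2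
      linarith
    · intro p hp
      simp only [mem_filter, mem_Icc, Nat.odd_iff] at hp
      set j := p / 2 with hj
      have hpj : p = 2 * j + 1 := by omega
      have hj2 : 2 ≤ j := by omega
      have hjR : (2:ℝ) ≤ (j:ℝ) := by exact_mod_cast hj2
      have hpR : (p:ℝ) = 2 * (j:ℝ) + 1 := by rw [hpj]; push_cast; ring
      have h1 : (0:ℝ) < j := by linarith
      have h2 : (0:ℝ) < (j:ℝ) + 1 := by linarith
      have key : (j:ℝ)⁻¹ - ((j:ℝ)+1)⁻¹ = 1 / ((j:ℝ) * ((j:ℝ)+1)) := by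
        field_simp
        ring
      rw [key, hpR, div_le_div_iff₀ (by positivity) (by positivity)]
      nlinarith
  have hsub : (Icc 3 n).filter (fun p => Odd p)
      ⊆ insert 3 ((Icc 5 n).filter (fun p => Odd p)) := by
    intro p hp
    simp only [mem_filter, mem_Icc, Nat.odd_iff, mem_insert] at hp ⊢
    omega
  calc ∑ p ∈ (Icc 3 n).filter (fun p => Odd p), 4/(p:ℝ)^2
      ≤ ∑ p ∈ insert 3 ((Icc 5 n).filter (fun p => Odd p)), 4/(p:ℝ)^2 := by
        refine Finset.sum_le_sum_of_subset_of_nonneg hsub fun p _ _ => by positivity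
    _ = 4/(3:ℝ)^2 + ∑ p ∈ (Icc 5 n).filter (fun p => Odd p), 4/(p:ℝ)^2 := by
        rw [Finset.sum_insert (by simp [mem_filter, mem_Icc])]
        norm_num
    _ ≤ 4/9 + 1/2 := by
        have := telescope n
        have h49 : (4:ℝ)/(3:ℝ)^2 = 4/9 := by norm_num
        linarith [le_trans step1 this]
    _ ≤ 17/18 := by norm_num

lemma sum_g_le (n : ℕ) :
    ∑ b ∈ (Icc 1 n).filter (fun b => Odd b), (4:ℝ)^(b.primeFactorsList.length) / (b:ℝ)^2 ≤ 18 := by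
  set g : ℕ → ℝ := fun b => (4:ℝ)^(b.primeFactorsList.length) / (b:ℝ)^2 with hg
  rcases Nat.lt_or_ge n 1 with h | h
  · rw [Finset.Icc_eq_empty (by omega)]; simp
  have hS0 : (0:ℝ) ≤ ∑ b ∈ (Icc 1 n).filter (fun b => Odd b), g b :=
    Finset.sum_nonneg fun b _ => by positivity
  set S := ∑ b ∈ (Icc 1 n).filter (fun b => Odd b), g b with hSdef
  have hsplit : (Icc 1 n).filter (fun b => Odd b)
      = insert 1 ((Icc 3 n).filter (fun b => Odd b)) := by
    ext b
    simp only [mem_filter, mem_Icc, mem_insert, Nat.odd_iff]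
    omega
  have hg1 : g 1 = 1 := by simp [hg]
  have hstep : ∑ b ∈ (Icc 3 n).filter (fun b => Odd b), g b
      ≤ ∑ q ∈ ((Icc 3 n).filter (fun p => Odd p)) ×ˢ ((Icc 1 n).filter (fun b => Odd b)),
          (4/(q.1:ℝ)^2) * g q.2 := by
    refine sum_le_sum_inj (fun b => (b.minFac, b / b.minFac)) ?_ ?_ ?_ ?_
    · intro b hb
      simp only [mem_filter, mem_Icc, Nat.odd_iff] at hb
      obtain ⟨⟨h3, hn⟩, hodd⟩ := hb
      have hb1 : b ≠ 1 := by omega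
      have hb0 : 0 < b := by omega
      have hp : b.minFac.Prime := Nat.minFac_prime hb1
      have hpd : b.minFac ∣ b := Nat.minFac_dvd b
      have h2 : ¬ (2 ∣ b) := by omega
      have hp2 : b.minFac ≠ 2 := fun he => h2 (he ▸ hpd)
      have hpodd : b.minFac % 2 = 1 := Nat.odd_iff.mp (hp.odd_of_ne_two hp2)
      have hp3 : 3 ≤ b.minFac := by have := hp.two_le; omega
      have hple : b.minFac ≤ b := Nat.minFac_le hb0
      have hcd : b / b.minFac ∣ b := Nat.div_dvd_of_dvd hpd
      have hc1 : 0 < b / b.minFac := Nat.div_pos hple (by omega)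
      have hcodd : (b / b.minFac) % 2 = 1 := by
        rcases Nat.even_or_odd (b / b.minFac) with he | ho
        · exact absurd (dvd_trans he.two_dvd hcd) h2
        · exact Nat.odd_iff.mp ho
      simp only [Finset.mem_product, mem_filter, mem_Icc, Nat.odd_iff]
      exact ⟨⟨⟨hp3, le_trans hple hn⟩, hpodd⟩,
        ⟨⟨hc1, le_trans (Nat.div_le_self _ _) hn⟩, hcodd⟩⟩
    · intro b hb b' hb' he
      simp only [mem_filter, mem_Icc, Nat.odd_iff] at hb hb'
      have h1 : b.minFac * (b / b.minFac) = b := Nat.mul_div_cancel' (Nat.minFac_dvd b)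
      have h1' : b'.minFac * (b' / b'.minFac) = b' := Nat.mul_div_cancel' (Nat.minFac_dvd b')
      have e1 : b.minFac = b'.minFac := congrArg Prod.fst he
      have e2 : b / b.minFac = b' / b'.minFac := congrArg Prod.snd he
      rw [← h1, ← h1', e2, e1]
    · intro q _; positivity
    · intro b hb
      simp only [mem_filter, mem_Icc, Nat.odd_iff] at hb
      obtain ⟨⟨h3, hn⟩, hodd⟩ := hb
      have hb1 : b ≠ 1 := by omega
      have hp : b.minFac.Prime := Nat.minFac_prime hb1
      have hpd : b.minFac ∣ b := Nat.minFac_dvd b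
      set p := b.minFac
      set c := b / p with hc
      have hmul : p * c = b := Nat.mul_div_cancel' hpd
      have hp0 : p ≠ 0 := hp.ne_zero
      have hc0 : c ≠ 0 := by
        intro h0; rw [h0, mul_zero] at hmul; omega
      have hΩ : b.primeFactorsList.length = 1 + c.primeFactorsList.length := by
        rw [← hmul, omega_mul hp0 hc0, Nat.primeFactorsList_prime hp]
        simp
      have hpR : (0:ℝ) < p := by exact_mod_cast hp.pos
      have hcR : (0:ℝ) < c := by exact_mod_cast Nat.pos_of_ne_zero hc0
      have hbR : (b:ℝ) = (p:ℝ) * c := by exact_mod_cast hmul.symm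
      show (4:ℝ)^(b.primeFactorsList.length) / (b:ℝ)^2
          ≤ 4/((b.minFac:ℝ))^2 * ((4:ℝ)^((b/b.minFac).primeFactorsList.length) / ((b/b.minFac:ℕ):ℝ)^2)
      refine le_of_eq ?_
      rw [hΩ, pow_add, pow_one]
      change (4:ℝ) * 4 ^ c.primeFactorsList.length / (b:ℝ)^2 = 4/(p:ℝ)^2 * (4 ^ c.primeFactorsList.length / (c:ℝ)^2)
      field_simp
      rw [hbR]
      ring
  have hprod : ∑ q ∈ ((Icc 3 n).filter (fun p => Odd p)) ×ˢ ((Icc 1 n).filter (fun b => Odd b)),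
          (4/(q.1:ℝ)^2) * g q.2
      = (∑ p ∈ (Icc 3 n).filter (fun p => Odd p), 4/(p:ℝ)^2) * S := by
    rw [hSdef, Finset.sum_mul_sum]
    rw [Finset.sum_product]
  have hθ : (∑ p ∈ (Icc 3 n).filter (fun p => Odd p), 4/(p:ℝ)^2) * S ≤ (17/18) * S := by
    exact mul_le_mul_of_nonneg_right (theta_le n) hS0
  have hSeq : S = 1 + ∑ b ∈ (Icc 3 n).filter (fun b => Odd b), g b := by
    rw [hSdef, hsplit, Finset.sum_insert (by simp only [mem_filter, mem_Icc]; omega), hg1]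
  have hkey := le_trans (hstep.trans_eq hprod) hθ
  rw [hSeq] at hkey ⊢
  linarith

noncomputable def sfPart (m : ℕ) : ℕ := (Nat.sq_mul_squarefree m).choose

noncomputable def sqPart (m : ℕ) : ℕ := (Nat.sq_mul_squarefree m).choose_spec.choose

lemma part_spec (m : ℕ) : (sqPart m)^2 * sfPart m = m ∧ Squarefree (sfPart m) :=
  (Nat.sq_mul_squarefree m).choose_spec.choose_spec

lemma count_odd (n j : ℕ) :
    ((((Icc 1 n).filter fun m => Odd m ∧ j ≤ m.primeFactorsList.length).card) : ℝ)
      ≤ 18 / 2^j * ((n:ℝ) * (1 + Real.log n)) := by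
  classical
  set S := (Icc 1 n).filter fun m => Odd m ∧ j ≤ m.primeFactorsList.length with hS
  set T := ((Icc 1 n).filter (fun b => Odd b)).sigma (fun b => Icc 1 (n / (b*b)))
    with hT
  set G : (Σ _ : ℕ, ℕ) → ℝ :=
    fun q => (4:ℝ)^(q.1.primeFactorsList.length) * ((q.2.divisors.card : ℝ)) with hG
  have hstep : (S.card : ℝ) ≤ ∑ q ∈ T, (1/(2:ℝ)^j) * G q := by
    rw [Finset.card_eq_sum_ones S]
    push_cast
    refine sum_le_sum_inj (fun m => ⟨sqPart m, sfPart m⟩) ?_ ?_ ?_ ?_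
    · intro m hm
      simp only [hS, mem_filter, mem_Icc] at hm
      obtain ⟨⟨hm1, hmn⟩, hodd, hj⟩ := hm
      obtain ⟨heq, hsf⟩ := part_spec m
      have ha0 : sfPart m ≠ 0 := by
        intro h0; rw [h0, mul_zero] at heq; omega
      have hb0 : sqPart m ≠ 0 := by
        intro h0; rw [h0] at heq; simp at heq; omega
      have hbdvd : sqPart m ∣ m := by
        have h := dvd_mul_of_dvd_left (dvd_pow_self (sqPart m) two_ne_zero) (sfPart m)
        rwa [heq] at h
      have hadvd : sfPart m ∣ m := by
        have h := dvd_mul_left (sfPart m) (sqPart m ^ 2)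
        rwa [heq] at h
      have hmodd : ¬ (2 ∣ m) := by
        rw [Nat.odd_iff] at hodd; omega
      simp only [hT, Finset.mem_sigma, mem_filter, mem_Icc]
      refine ⟨⟨⟨Nat.one_le_iff_ne_zero.mpr hb0, ?_⟩, ?_⟩, Nat.one_le_iff_ne_zero.mpr ha0, ?_⟩
      · calc sqPart m ≤ m := Nat.le_of_dvd (by omega) hbdvd
          _ ≤ n := hmn
      · rw [Nat.odd_iff]
        rcases Nat.even_or_odd (sqPart m) with he | ho
        · exact absurd (dvd_trans he.two_dvd hbdvd) hmodd
        · exact Nat.odd_iff.mp ho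
      · rw [Nat.le_div_iff_mul_le (by positivity)]
        calc sfPart m * (sqPart m * sqPart m) = (sqPart m)^2 * sfPart m := by ring
          _ = m := heq
          _ ≤ n := hmn
    · intro m hm m' hm' he
      have h1 := (part_spec m).1
      have h2 := (part_spec m').1
      have e1 : sqPart m = sqPart m' := congrArg Sigma.fst he
      have e2 : sfPart m = sfPart m' := by
        have := congrArg (fun q : (Σ _ : ℕ, ℕ) => q.2) he
        exact this
      calc m = sqPart m ^ 2 * sfPart m := h1.symm
        _ = sqPart m' ^ 2 * sfPart m' := by rw [e1, e2]
        _ = m' := h2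
    · intro q _
      simp only [hG]
      positivity
    · intro m hm
      simp only [hS, mem_filter, mem_Icc] at hm
      obtain ⟨⟨hm1, hmn⟩, hodd, hj⟩ := hm
      obtain ⟨heq, hsf⟩ := part_spec m
      have ha0 : sfPart m ≠ 0 := by
        intro h0; rw [h0, mul_zero] at heq; omega
      have hb0 : sqPart m ≠ 0 := by
        intro h0; rw [h0] at heq; simp at heq; omega
      have hsq0 : (sqPart m)^2 ≠ 0 := pow_ne_zero 2 hb0
      have hΩ : m.primeFactorsList.length
          = 2 * (sqPart m).primeFactorsList.length + (sfPart m).primeFactorsList.length := by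
        have h1 := omega_mul hsq0 ha0
        have h2 : ((sqPart m)^2).primeFactorsList.length
            = 2 * (sqPart m).primeFactorsList.length := by
          rw [pow_two, omega_mul hb0 hb0]; ring
        rw [heq] at h1
        rw [h1, h2]
      have hkey : (2:ℕ)^j ≤ 4^((sqPart m).primeFactorsList.length) * (sfPart m).divisors.card := by
        rw [tau_squarefree ha0 hsf]
        calc (2:ℕ)^j ≤ 2^(m.primeFactorsList.length) := Nat.pow_le_pow_right (by norm_num) hj
          _ = 4^((sqPart m).primeFactorsList.length) * 2^((sfPart m).primeFactorsList.length) := by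
              rw [hΩ, pow_add, pow_mul]
              norm_num
      have hkeyR : (2:ℝ)^j ≤ (4:ℝ)^((sqPart m).primeFactorsList.length)
          * ((sfPart m).divisors.card : ℝ) := by
        exact_mod_cast hkey
      simp only [hG]
      rw [one_div, inv_mul_eq_div, one_le_div (by positivity : (0:ℝ) < 2^j)]
      exact hkeyR
  have hTbound : ∑ q ∈ T, G q ≤ 18 * ((n:ℝ) * (1 + Real.log n)) := by
    rw [hT, Finset.sum_sigma]
    have hinner : ∀ b ∈ (Icc 1 n).filter (fun b => Odd b),
        (∑ a ∈ Icc 1 (n / (b*b)), G ⟨b, a⟩)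
          ≤ ((4:ℝ)^(b.primeFactorsList.length) / (b:ℝ)^2) * ((n:ℝ) * (1 + Real.log n)) := by
      intro b hb
      simp only [mem_filter, mem_Icc] at hb
      have hb1 : 1 ≤ b := hb.1.1
      have hbn : b ≤ n := hb.1.2
      have hbR : (1:ℝ) ≤ (b:ℝ) := by exact_mod_cast hb1
      set M := n / (b*b) with hM
      have hMn : M ≤ n := Nat.div_le_self _ _
      have hMR : (M:ℝ) * (b:ℝ)^2 ≤ (n:ℝ) := by
        have := Nat.div_mul_le_self n (b*b)
        calc (M:ℝ) * (b:ℝ)^2 = ((M * (b*b) : ℕ) : ℝ) := by push_cast; ring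
          _ ≤ n := by exact_mod_cast this
      have hlogM : 1 + Real.log M ≤ 1 + Real.log n := by
        have h1 : Real.log M ≤ Real.log n := by
          rcases Nat.eq_zero_or_pos M with h0 | h0
          · rw [h0]; simpa using Real.log_natCast_nonneg n
          · exact Real.log_le_log (by exact_mod_cast h0) (by exact_mod_cast hMn)
        linarith
      have hlogM0 : (0:ℝ) ≤ 1 + Real.log M := by
        have := Real.log_natCast_nonneg M
        linarith
      calc (∑ a ∈ Icc 1 M, G ⟨b, a⟩)
          = (4:ℝ)^(b.primeFactorsList.length) * ∑ a ∈ Icc 1 M, ((a.divisors.card : ℝ)) := by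
            rw [Finset.mul_sum]
        _ ≤ (4:ℝ)^(b.primeFactorsList.length) * ((M:ℝ) * (1 + Real.log M)) := by
            refine mul_le_mul_of_nonneg_left (sum_tau_le M) (by positivity)
        _ ≤ ((4:ℝ)^(b.primeFactorsList.length) / (b:ℝ)^2) * ((n:ℝ) * (1 + Real.log n)) := by
            rw [div_mul_eq_mul_div, mul_comm ((4:ℝ)^(b.primeFactorsList.length)) _,
              mul_comm ((4:ℝ)^(b.primeFactorsList.length)) _, le_div_iff₀ (by positivity)]
            have hmm : (M:ℝ) * (1 + Real.log M) * (b:ℝ)^2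
                = ((M:ℝ) * (b:ℝ)^2) * (1 + Real.log M) := by ring
            calc (M:ℝ) * (1 + Real.log M) * (4:ℝ)^(b.primeFactorsList.length) * (b:ℝ)^2
                = (((M:ℝ) * (b:ℝ)^2) * (1 + Real.log M)) * (4:ℝ)^(b.primeFactorsList.length) := by
                  ring
              _ ≤ (((n:ℝ)) * (1 + Real.log n)) * (4:ℝ)^(b.primeFactorsList.length) := by
                  refine mul_le_mul_of_nonneg_right ?_ (by positivity)
                  refine mul_le_mul hMR hlogM hlogM0 (by positivity)
              _ = (n:ℝ) * (1 + Real.log n) * (4:ℝ)^(b.primeFactorsList.length) := by ring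
    calc ∑ b ∈ (Icc 1 n).filter (fun b => Odd b), (∑ a ∈ Icc 1 (n / (b*b)), G ⟨b, a⟩)
        ≤ ∑ b ∈ (Icc 1 n).filter (fun b => Odd b),
            ((4:ℝ)^(b.primeFactorsList.length) / (b:ℝ)^2) * ((n:ℝ) * (1 + Real.log n)) :=
          Finset.sum_le_sum hinner
      _ = (∑ b ∈ (Icc 1 n).filter (fun b => Odd b),
            (4:ℝ)^(b.primeFactorsList.length) / (b:ℝ)^2) * ((n:ℝ) * (1 + Real.log n)) := by
          rw [Finset.sum_mul]
      _ ≤ 18 * ((n:ℝ) * (1 + Real.log n)) := by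
          refine mul_le_mul_of_nonneg_right (sum_g_le n) ?_
          have := Real.log_natCast_nonneg n
          positivity
  calc (S.card : ℝ) ≤ ∑ q ∈ T, (1/(2:ℝ)^j) * G q := hstep
    _ = (1/(2:ℝ)^j) * ∑ q ∈ T, G q := by rw [Finset.mul_sum]
    _ ≤ (1/(2:ℝ)^j) * (18 * ((n:ℝ) * (1 + Real.log n))) := by
        refine mul_le_mul_of_nonneg_left hTbound (by positivity)
    _ = 18 / 2^j * ((n:ℝ) * (1 + Real.log n)) := by ring

/-- There is `C₃ > 0` such that the number of `d ≤ x` with `Ω(d) ≥ K` is at most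
`C₃·(K/2^K)·x·log x`. -/
theorem count_many_prime_factors :
    ∃ C₃ : ℝ, 0 < C₃ ∧ ∀ K : ℕ, 0 < K → ∀ x : ℝ, 3 ≤ x →
      (((Finset.Icc 1 ⌊x⌋₊).filter fun d => K ≤ d.primeFactorsList.length).card : ℝ) ≤
        C₃ * ((K : ℝ) / 2 ^ K) * x * Real.log x := by
  classical
  refine ⟨37, by norm_num, fun K hK x hx => ?_⟩
  set n := ⌊x⌋₊ with hn
  have hx0 : (0:ℝ) < x := by linarith
  have hnx : (n:ℝ) ≤ x := Nat.floor_le hx0.le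
  have hn3 : 3 ≤ n := Nat.le_floor (by exact_mod_cast hx)
  have hlogx1 : 1 ≤ Real.log x := by
    rw [Real.le_log_iff_exp_le hx0]
    calc Real.exp 1 ≤ 2.7182818286 := Real.exp_one_lt_d9.le
      _ ≤ 3 := by norm_num
      _ ≤ x := hx
  have hlogx0 : 0 ≤ Real.log x := by linarith
  have hlogn : Real.log n ≤ Real.log x :=
    Real.log_le_log (by exact_mod_cast Nat.lt_of_lt_of_le (by norm_num) hn3) hnx
  set S := (Icc 1 n).filter (fun d => K ≤ d.primeFactorsList.length) with hS
  set S₁ := (Icc 1 n).filter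
    (fun d => d.factorization 2 < K ∧ K ≤ d.primeFactorsList.length) with hS₁
  set S₂ := (Icc 1 n).filter (fun d => 2^K ∣ d) with hS₂
  have hsub : S ⊆ S₁ ∪ S₂ := by
    intro d hd
    simp only [hS, hS₁, hS₂, mem_filter, mem_Icc, mem_union] at hd ⊢
    obtain ⟨hd1, hdK⟩ := hd
    rcases Nat.lt_or_ge (d.factorization 2) K with h | h
    · exact Or.inl ⟨hd1, h, hdK⟩
    · refine Or.inr ⟨hd1, dvd_trans (pow_dvd_pow 2 h) (Nat.ordProj_dvd d 2)⟩
  have hcard2 : S₂.card = n / 2^K := by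
    rw [hS₂]
    have : Icc 1 n = Ioc 0 n := rfl
    rw [this]
    exact Nat.Ioc_filter_dvd_card_eq_div n (2^K)
  -- S₁ bound
  set A : ℕ → Finset ℕ := fun t =>
    (Icc 1 (n / 2^t)).filter (fun m => Odd m ∧ K - t ≤ m.primeFactorsList.length) with hA
  have hcard1 : S₁.card ≤ ∑ t ∈ range K, (A t).card := by
    rw [← Finset.card_sigma]
    refine Finset.card_le_card_of_injOn
      (fun d => ⟨d.factorization 2, d / 2^(d.factorization 2)⟩) ?_ ?_
    · intro d hd
      simp only [hS₁, Finset.mem_coe, mem_filter, mem_Icc] at hd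
      obtain ⟨⟨hd1, hdn⟩, htK, hdK⟩ := hd
      have hd0 : d ≠ 0 := by omega
      have hmul : 2^(d.factorization 2) * (d / 2^(d.factorization 2)) = d :=
        Nat.ordProj_mul_ordCompl_eq_self d 2
      have hm0 : 0 < d / 2^(d.factorization 2) := Nat.ordCompl_pos 2 hd0
      have hmodd : ¬ (2 ∣ d / 2^(d.factorization 2)) := Nat.not_dvd_ordCompl Nat.prime_two hd0
      have hΩ : d.primeFactorsList.length
          = d.factorization 2 + (d / 2^(d.factorization 2)).primeFactorsList.length := by
        conv_lhs => rw [← hmul]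
        rw [omega_mul (by positivity) (by omega),
          Nat.Prime.primeFactorsList_pow Nat.prime_two]
        simp
      simp only [Finset.mem_coe, Finset.mem_sigma, mem_range, hA, mem_filter, mem_Icc]
      refine ⟨htK, ⟨hm0, ?_⟩, ?_, by omega⟩
      · rw [Nat.le_div_iff_mul_le (by positivity)]
        calc d / 2^(d.factorization 2) * 2^(d.factorization 2) ≤ d := Nat.div_mul_le_self d _
          _ ≤ n := hdn
      · rw [Nat.odd_iff]; omega
    · intro d hd d' hd' he
      simp only [Set.mem_setOf_eq] at *
      have e1 : d.factorization 2 = d'.factorization 2 := congrArg Sigma.fst he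
      have e2 : d / 2^(d.factorization 2) = d' / 2^(d'.factorization 2) := by
        have := congrArg (fun q : (Σ _ : ℕ, ℕ) => q.2) he
        exact this
      calc d = 2^(d.factorization 2) * (d / 2^(d.factorization 2)) :=
            (Nat.ordProj_mul_ordCompl_eq_self d 2).symm
        _ = 2^(d'.factorization 2) * (d' / 2^(d'.factorization 2)) := by rw [e2, e1]
        _ = d' := Nat.ordProj_mul_ordCompl_eq_self d' 2
  -- real bounds on each A t
  have hAt : ∀ t ∈ range K, ((A t).card : ℝ) ≤ 36 * x * Real.log x / 2^K := by
    intro t ht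
    simp only [mem_range] at ht
    set M := n / 2^t with hM
    have h1 : ((A t).card : ℝ) ≤ 18 / 2^(K-t) * ((M:ℝ) * (1 + Real.log M)) := count_odd M (K - t)
    have hMx : (M:ℝ) ≤ x / 2^t := by
      rw [le_div_iff₀ (by positivity)]
      calc (M:ℝ) * 2^t = ((M * 2^t : ℕ) : ℝ) := by push_cast; ring
        _ ≤ (n:ℝ) := by exact_mod_cast Nat.div_mul_le_self n (2^t)
        _ ≤ x := hnx
    have hMlog : 1 + Real.log M ≤ 2 * Real.log x := by
      have hlogM : Real.log M ≤ Real.log x := by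
        rcases Nat.eq_zero_or_pos M with h0 | h0
        · rw [h0]; simpa using hlogx0
        · refine Real.log_le_log (by exact_mod_cast h0) ?_
          calc (M:ℝ) ≤ (n:ℝ) := by exact_mod_cast Nat.div_le_self n (2^t)
            _ ≤ x := hnx
      linarith
    have hpow : (2:ℝ)^(K-t) * (2:ℝ)^t = 2^K := by
      rw [← pow_add, Nat.sub_add_cancel ht.le]
    have hM0 : (0:ℝ) ≤ (M:ℝ) := by positivity
    have hMlog0 : (0:ℝ) ≤ 1 + Real.log M := by
      have := Real.log_natCast_nonneg M
      linarith
    calc ((A t).card : ℝ) ≤ 18 / 2^(K-t) * ((M:ℝ) * (1 + Real.log M)) := h1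
      _ ≤ 18 / 2^(K-t) * ((x / 2^t) * (2 * Real.log x)) := by
          refine mul_le_mul_of_nonneg_left ?_ (by positivity)
          exact mul_le_mul hMx hMlog hMlog0 (by positivity)
      _ = 36 * x * Real.log x / ((2:ℝ)^(K-t) * (2:ℝ)^t) := by
          field_simp
          ring
      _ = 36 * x * Real.log x / 2^K := by rw [hpow]
  -- card S₂ bound
  have hS₂R : ((S₂.card : ℝ)) ≤ (K:ℝ) * x * Real.log x / 2^K := by
    rw [hcard2]
    have h1 : ((n / 2^K : ℕ) : ℝ) ≤ x / 2^K := by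
      rw [le_div_iff₀ (by positivity)]
      calc ((n / 2^K : ℕ):ℝ) * 2^K = ((n / 2^K * 2^K : ℕ) : ℝ) := by push_cast; ring
        _ ≤ (n:ℝ) := by exact_mod_cast Nat.div_mul_le_self n (2^K)
        _ ≤ x := hnx
    have hK1 : (1:ℝ) ≤ (K:ℝ) := by exact_mod_cast hK
    calc ((n / 2^K : ℕ) : ℝ) ≤ x / 2^K := h1
      _ ≤ (K:ℝ) * x * Real.log x / 2^K := by
          have hxa : x ≤ (K:ℝ) * x := by nlinarith
          have hxb : (K:ℝ) * x ≤ (K:ℝ) * x * Real.log x := by nlinarith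
          gcongr
          linarith
  have hSR : ((S.card : ℝ)) ≤ ((S₁.card : ℝ)) + ((S₂.card : ℝ)) := by
    have := Finset.card_le_card hsub
    have h2 := Finset.card_union_le S₁ S₂
    exact_mod_cast le_trans this h2
  have hS₁R : ((S₁.card : ℝ)) ≤ (K:ℝ) * (36 * x * Real.log x / 2^K) := by
    calc ((S₁.card : ℝ)) ≤ ((∑ t ∈ range K, (A t).card : ℕ) : ℝ) := by exact_mod_cast hcard1
      _ = ∑ t ∈ range K, (((A t).card : ℝ)) := by push_cast; ring
      _ ≤ ∑ t ∈ range K, 36 * x * Real.log x / 2^K := Finset.sum_le_sum hAt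
      _ = (K:ℝ) * (36 * x * Real.log x / 2^K) := by
          rw [Finset.sum_const, Finset.card_range]; simp [nsmul_eq_mul]
  calc ((S.card : ℝ)) ≤ ((S₁.card : ℝ)) + ((S₂.card : ℝ)) := hSR
    _ ≤ (K:ℝ) * (36 * x * Real.log x / 2^K) + (K:ℝ) * x * Real.log x / 2^K := by
        exact add_le_add hS₁R hS₂R
    _ = 37 * ((K : ℝ) / 2 ^ K) * x * Real.log x := by
        field_simp
        ring
end
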